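/- Let Y : [0,T] → [0,∞) be continuous with Y(0) = 0 and of bounded variation, let F : [0,T] → ℝ be continuous, and suppose the Lebesgue–Stieltjes measure of Y² satisfies d(Y²)(t) ≤ 2Y(t)(F(t)Y(t) + γ(t)) dt for a continuous γ ≥ 0 (i.e., Y(t)² - Y(s)² ≤ ∫_s^t 2Y(u)(F(u)Y(u)+γ(u)) du for all s ≤ t). Then Y(t) ≤ ∫_0^t γ(s) exp(∫_s^t F(u) du) ds for all t ∈ [0,T]. -/

import Mathlib

open MeasureTheory Set intervalIntegral

/-- Extend a function continuous on `Icc a b` to a continuous function on `ℝ`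
whose values are all values of `f` on `Icc a b`. -/
lemma comparison_step_ext {a b : ℝ} (hab : a ≤ b) {f : ℝ → ℝ}
    (hf : ContinuousOn f (Icc a b)) :
    ∃ g : ℝ → ℝ, Continuous g ∧ (∀ x ∈ Icc a b, g x = f x) ∧
      ∀ x, ∃ y ∈ Icc a b, g x = f y := by
  refine ⟨IccExtend hab ((Icc a b).restrict f), ?_, ?_, ?_⟩
  · exact (continuousOn_iff_continuous_restrict.mp hf).Icc_extend'
  · intro x hx
    rw [IccExtend_of_mem hab _ hx]
    rfl
  · intro x
    exact ⟨(projIcc a b hab x : ℝ), (projIcc a b hab x).2, rfl⟩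

/-- Combined comparison step: if `Y ≥ 0` is continuous of bounded variation with
`Y 0 = 0` and `d(Y²) ≤ 2Y (F Y + γ) dt` (in integrated form), then
`Y t ≤ ∫_0^t γ s exp(∫_s^t F) ds`. -/
theorem comparison_step (T : ℝ) (hT : 0 < T)
    (Y : ℝ → ℝ) (hYc : ContinuousOn Y (Icc 0 T))
    (hYbv : BoundedVariationOn Y (Icc 0 T))
    (hYpos : ∀ t ∈ Icc (0:ℝ) T, 0 ≤ Y t) (hY0 : Y 0 = 0)
    (F : ℝ → ℝ) (hFc : ContinuousOn F (Icc 0 T))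
    (γ : ℝ → ℝ) (hγc : ContinuousOn γ (Icc 0 T)) (hγpos : ∀ t ∈ Icc (0:ℝ) T, 0 ≤ γ t)
    (hineq : ∀ s t : ℝ, 0 ≤ s → s ≤ t → t ≤ T →
      (Y t) ^ 2 - (Y s) ^ 2 ≤ ∫ u in s..t, 2 * Y u * (F u * Y u + γ u)) :
    ∀ t ∈ Icc (0:ℝ) T, Y t ≤ ∫ s in (0:ℝ)..t, γ s * Real.exp (∫ u in s..t, F u) := by
  obtain ⟨Fe, hFe, hFeq, -⟩ := comparison_step_ext hT.le hFc
  obtain ⟨γe, hγe, hγeq, hγrange⟩ := comparison_step_ext hT.le hγc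
  obtain ⟨Ye, hYe, hYeq, hYrange⟩ := comparison_step_ext hT.le hYc
  have hγe0 : ∀ x, 0 ≤ γe x := by
    intro x; obtain ⟨y, hy, hxy⟩ := hγrange x; rw [hxy]; exact hγpos y hy
  have hYe0 : ∀ x, 0 ≤ Ye x := by
    intro x; obtain ⟨y, hy, hxy⟩ := hYrange x; rw [hxy]; exact hYpos y hy
  have hYe0' : Ye 0 = 0 := by rw [hYeq 0 (left_mem_Icc.mpr hT.le), hY0]
  -- the antiderivative of Fe
  set A : ℝ → ℝ := fun x => ∫ u in (0:ℝ)..x, Fe u with hA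
  have hAderiv : ∀ x, HasDerivAt A (Fe x) x := fun x =>
    (hFe.integral_hasStrictDerivAt 0 x).hasDerivAt
  have hAcont : Continuous A :=
    continuous_iff_continuousAt.mpr fun x => (hAderiv x).continuousAt
  have hA0 : A 0 = 0 := integral_same
  -- main claim, for every ε > 0
  have key : ∀ ε : ℝ, 0 < ε → ∀ r ∈ Icc (0:ℝ) T,
      Ye r ≤ Real.exp (A r) * (ε + ∫ s in (0:ℝ)..r, (γe s + ε) * Real.exp (-(A s))) := by
    intro ε hε
    set g : ℝ → ℝ := fun s => (γe s + ε) * Real.exp (-(A s)) with hg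
    have hgcont : Continuous g := (hγe.add continuous_const).mul (Real.continuous_exp.comp hAcont.neg)
    have hg0 : ∀ x, 0 ≤ g x := fun x =>
      mul_nonneg (by linarith [hγe0 x]) (Real.exp_nonneg _)
    set φ : ℝ → ℝ := fun x => Real.exp (A x) * (ε + ∫ s in (0:ℝ)..x, g s) with hφ
    have hφderiv : ∀ x, HasDerivAt φ (Fe x * φ x + (γe x + ε)) x := by
      intro x
      have h1 : HasDerivAt (fun x => ε + ∫ s in (0:ℝ)..x, g s) (g x) x :=
        ((hgcont.integral_hasStrictDerivAt 0 x).hasDerivAt).const_add ε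
      have h2 : HasDerivAt (fun x => Real.exp (A x)) (Real.exp (A x) * Fe x) x :=
        (Real.hasDerivAt_exp (A x)).comp x (hAderiv x)
      have h3 := h2.mul h1
      refine (h3 : HasDerivAt φ _ x).congr_deriv ?_
      have hexp : Real.exp (A x) * g x = γe x + ε := by
        rw [hg]
        rw [show Real.exp (A x) * ((γe x + ε) * Real.exp (-(A x)))
            = (γe x + ε) * (Real.exp (A x) * Real.exp (-(A x))) by ring,
          ← Real.exp_add, add_neg_cancel, Real.exp_zero, mul_one]
      rw [hφ]
      simp only
      rw [← hexp]
      ring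
    have hφcont : Continuous φ :=
      continuous_iff_continuousAt.mpr fun x => (hφderiv x).continuousAt
    have hφpos : ∀ x, 0 ≤ x → 0 < φ x := by
      intro x hx
      have hint : 0 ≤ ∫ s in (0:ℝ)..x, g s :=
        intervalIntegral.integral_nonneg hx (fun u _ => hg0 u)
      have : 0 < ε + ∫ s in (0:ℝ)..x, g s := by linarith
      exact mul_pos (Real.exp_pos _) this
    have hφ0 : φ 0 = ε := by
      rw [hφ]; simp [hA0]
    have hφsq : ∀ a b : ℝ, (φ b) ^ 2 - (φ a) ^ 2
        = ∫ u in a..b, 2 * φ u * (Fe u * φ u + (γe u + ε)) := by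
      intro a b
      have hcontd : Continuous fun u => 2 * φ u * (Fe u * φ u + (γe u + ε)) :=
        (continuous_const.mul hφcont).mul ((hFe.mul hφcont).add (hγe.add continuous_const))
      rw [intervalIntegral.integral_eq_sub_of_hasDerivAt
        (f := fun x => (φ x) ^ 2) (fun x _ => by
          have : HasDerivAt (fun x => φ x ^ 2) _ x := (hφderiv x).pow 2
          simpa [pow_one, mul_assoc, mul_comm, mul_left_comm] using this)
        (hcontd.intervalIntegrable a b)]
    -- the crossing argument
    suffices hsuff : ∀ r ∈ Icc (0:ℝ) T, Ye r ≤ φ r by exact hsuff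
    by_contra hcon
    push_neg at hcon
    obtain ⟨r₀, hr₀, hφr₀⟩ := hcon
    set S : Set ℝ := Icc 0 T ∩ {x | φ x ≤ Ye x} with hS
    have hSne : S.Nonempty := ⟨r₀, hr₀, hφr₀.le⟩
    have hSclosed : IsClosed S := isClosed_Icc.inter (isClosed_le hφcont hYe)
    have hSbdd : BddBelow S := ⟨0, fun x hx => hx.1.1⟩
    set t₀ := sInf S with ht₀
    have ht₀S : t₀ ∈ S := hSclosed.csInf_mem hSne hSbdd
    have ht₀mem : t₀ ∈ Icc (0:ℝ) T := ht₀S.1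
    have hlt : ∀ s, 0 ≤ s → s < t₀ → Ye s < φ s := by
      intro s hs0 hst
      by_contra h
      push_neg at h
      have hsS : s ∈ S := ⟨⟨hs0, hst.le.trans ht₀mem.2⟩, h⟩
      exact absurd (csInf_le hSbdd hsS) (not_le.mpr hst)
    have ht₀pos : 0 < t₀ := by
      rcases ht₀mem.1.lt_or_eq with h | h
      · exact h
      · exfalso
        have h2 := ht₀S.2
        rw [← h] at h2
        simp only [Set.mem_setOf_eq] at h2
        rw [hφ0, hYe0'] at h2
        linarith
    have hYeφ : ∀ u ∈ Icc 0 t₀, Ye u ≤ φ u := by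
      have hsub : Icc 0 t₀ ⊆ {x | Ye x ≤ φ x} := by
        rw [← closure_Ico ht₀pos.ne]
        exact (isClosed_le hYe hφcont).closure_subset_iff.mpr
          (fun x hx => (hlt x hx.1 hx.2).le)
      exact hsub
    have hYet₀ : Ye t₀ = φ t₀ :=
      le_antisymm (hYeφ t₀ (right_mem_Icc.mpr ht₀pos.le)) ht₀S.2
    -- bounds on [0, t₀]
    obtain ⟨M, hM⟩ := (isCompact_Icc : IsCompact (Icc (0:ℝ) t₀)).exists_bound_of_continuousOn
      hFe.continuousOn
    obtain ⟨K, hK⟩ := (isCompact_Icc : IsCompact (Icc (0:ℝ) t₀)).exists_bound_of_continuousOn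
      (hφcont.add hYe).continuousOn
    have hM0 : 0 ≤ M := le_trans (norm_nonneg _) (hM 0 (left_mem_Icc.mpr ht₀pos.le))
    have hK0 : 0 ≤ K := le_trans (norm_nonneg _) (hK 0 (left_mem_Icc.mpr ht₀pos.le))
    obtain ⟨x₀, hx₀mem, hx₀min⟩ := (isCompact_Icc : IsCompact (Icc (0:ℝ) t₀)).exists_isMinOn
      (nonempty_Icc.mpr ht₀pos.le) hφcont.continuousOn
    set c := φ x₀ with hc
    have hcpos : 0 < c := hφpos x₀ hx₀mem.1
    set η := ε * c / (M * K + 1) with hη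
    have hηpos : 0 < η := div_pos (mul_pos hε hcpos) (by nlinarith)
    -- choose s close to t₀
    have hcont0 : ContinuousAt (fun x => φ x - Ye x) t₀ := (hφcont.sub hYe).continuousAt
    rw [Metric.continuousAt_iff] at hcont0
    obtain ⟨δ, hδpos, hδ⟩ := hcont0 η hηpos
    set s := max 0 (t₀ - δ / 2) with hs
    have hs0 : 0 ≤ s := le_max_left _ _
    have hst₀ : s < t₀ := by
      rw [hs, max_lt_iff]
      constructor <;> linarith
    have hsclose : ∀ u ∈ Icc s t₀, φ u - Ye u < η := by
      intro u hu
      have h1 : t₀ - δ / 2 ≤ s := le_max_right _ _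
      have h2 : dist u t₀ < δ := by
        rw [Real.dist_eq, abs_lt]
        constructor <;> [linarith [hu.1]; linarith [hu.2]]
      have := hδ h2
      rw [Real.dist_eq, hYet₀] at this
      have h3 := abs_lt.mp this
      linarith [h3.2]
    -- pointwise comparison of integrands on [s, t₀]
    have h_pt : ∀ u ∈ Icc s t₀,
        2 * Ye u * (Fe u * Ye u + γe u) ≤ 2 * φ u * (Fe u * φ u + (γe u + ε)) := by
      intro u hu
      have huT : u ∈ Icc (0:ℝ) t₀ := ⟨hs0.trans hu.1, hu.2⟩
      have hd0 : 0 ≤ φ u - Ye u := by linarith [hYeφ u huT]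
      have hdη : φ u - Ye u < η := hsclose u hu
      have hFu := abs_le.mp ((Real.norm_eq_abs _ ▸ hM u huT))
      have hsum : φ u + Ye u ≤ K := le_trans (le_abs_self _) (Real.norm_eq_abs _ ▸ hK u huT)
      have hsum0 : 0 ≤ φ u + Ye u := add_nonneg (hφpos u huT.1).le (hYe0 u)
      have hφc : c ≤ φ u := hx₀min huT
      have hγu := hγe0 u
      have hηMK : η * (M * K + 1) = ε * c := by
        rw [hη]; field_simp
      nlinarith [mul_nonneg hd0 hsum0, mul_nonneg hd0 hγu,
        mul_le_mul hdη.le hsum hsum0 hηpos.le,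
        mul_nonneg (mul_nonneg hd0 hsum0) (sub_nonneg.mpr hFu.2),
        mul_nonneg (mul_nonneg hd0 hsum0) (by linarith [hFu.1] : (0:ℝ) ≤ Fe u + M),
        mul_le_mul_of_nonneg_left (mul_le_mul hdη.le hsum hsum0 hηpos.le) hM0]
    -- integrate
    have hint1 : Continuous fun u => 2 * Ye u * (Fe u * Ye u + γe u) :=
      (continuous_const.mul hYe).mul ((hFe.mul hYe).add hγe)
    have hint2 : Continuous fun u => 2 * φ u * (Fe u * φ u + (γe u + ε)) :=
      (continuous_const.mul hφcont).mul ((hFe.mul hφcont).add (hγe.add continuous_const))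
    have hmono : (∫ u in s..t₀, 2 * Ye u * (Fe u * Ye u + γe u))
        ≤ ∫ u in s..t₀, 2 * φ u * (Fe u * φ u + (γe u + ε)) :=
      intervalIntegral.integral_mono_on hst₀.le (hint1.intervalIntegrable _ _)
        (hint2.intervalIntegrable _ _) h_pt
    have hIcc_sub : Icc s t₀ ⊆ Icc (0:ℝ) T := fun u hu =>
      ⟨hs0.trans hu.1, hu.2.trans ht₀mem.2⟩
    have hcongr : (∫ u in s..t₀, 2 * Y u * (F u * Y u + γ u))
        = ∫ u in s..t₀, 2 * Ye u * (Fe u * Ye u + γe u) := by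
      apply intervalIntegral.integral_congr
      intro u hu
      rw [uIcc_of_le hst₀.le] at hu
      have huT := hIcc_sub hu
      simp only
      rw [hYeq u huT, hFeq u huT, hγeq u huT]
    have hineq' : Ye t₀ ^ 2 - Ye s ^ 2
        ≤ ∫ u in s..t₀, 2 * Ye u * (Fe u * Ye u + γe u) := by
      have h := hineq s t₀ hs0 hst₀.le ht₀mem.2
      rw [hYeq t₀ ht₀mem, hYeq s ⟨hs0, hst₀.le.trans ht₀mem.2⟩]
      rw [← hcongr]
      exact h
    have hφident := hφsq s t₀
    have hYs : Ye s < φ s := hlt s hs0 hst₀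
    have hYs2 : Ye s ^ 2 < φ s ^ 2 := by
      have := hφpos s hs0
      nlinarith [hYe0 s]
    rw [hYet₀] at hineq'
    linarith
  -- conclusion: let ε → 0
  intro t ht
  -- rewrite the conclusion of `key` into the target form plus ε-terms
  have hAint : ∀ a b : ℝ, IntervalIntegrable Fe volume a b := fun a b =>
    hFe.intervalIntegrable a b
  have hsplit : ∀ x ∈ Icc 0 t, A t - A x = ∫ u in x..t, F u := by
    intro x hx
    have h1 : (∫ u in (0:ℝ)..x, Fe u) + ∫ u in x..t, Fe u = ∫ u in (0:ℝ)..t, Fe u :=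
      intervalIntegral.integral_add_adjacent_intervals (hAint 0 x) (hAint x t)
    have h2 : (∫ u in x..t, Fe u) = ∫ u in x..t, F u := by
      apply intervalIntegral.integral_congr
      intro u hu
      rw [uIcc_of_le hx.2] at hu
      exact hFeq u ⟨hx.1.trans hu.1, hu.2.trans ht.2⟩
    rw [hA, ← h2]
    linarith
  have hGcont : Continuous fun x : ℝ => Real.exp (A t - A x) :=
    Real.continuous_exp.comp (continuous_const.sub hAcont)
  set C : ℝ := Real.exp (A t) + ∫ x in (0:ℝ)..t, Real.exp (A t - A x) with hC
  have hC0 : 0 ≤ C := by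
    have : 0 ≤ ∫ x in (0:ℝ)..t, Real.exp (A t - A x) :=
      intervalIntegral.integral_nonneg ht.1 (fun u _ => (Real.exp_nonneg _))
    positivity
  set G : ℝ := ∫ x in (0:ℝ)..t, γ x * Real.exp (∫ u in x..t, F u) with hG
  have hbound : ∀ ε : ℝ, 0 < ε → Y t ≤ G + ε * C := by
    intro ε hε
    have h := key ε hε t ht
    rw [hYeq t ht] at h
    refine h.trans ?_
    have hcγ : Continuous fun x => (γe x + ε) * Real.exp (-(A x)) :=
      (hγe.add continuous_const).mul (Real.continuous_exp.comp hAcont.neg)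
    have hpush : Real.exp (A t) * (ε + ∫ x in (0:ℝ)..t, (γe x + ε) * Real.exp (-(A x)))
        = Real.exp (A t) * ε + ∫ x in (0:ℝ)..t, (γe x + ε) * Real.exp (A t - A x) := by
      rw [mul_add]
      congr 1
      rw [← intervalIntegral.integral_const_mul]
      apply intervalIntegral.integral_congr
      intro x _
      simp only
      rw [show Real.exp (A t) * ((γe x + ε) * Real.exp (-(A x)))
          = (γe x + ε) * (Real.exp (A t) * Real.exp (-(A x))) by ring,
        ← Real.exp_add, ← sub_eq_add_neg]
    rw [hpush]
    have hadd : (∫ x in (0:ℝ)..t, (γe x + ε) * Real.exp (A t - A x))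
        = (∫ x in (0:ℝ)..t, γe x * Real.exp (A t - A x))
          + ε * ∫ x in (0:ℝ)..t, Real.exp (A t - A x) := by
      rw [← intervalIntegral.integral_const_mul, ← intervalIntegral.integral_add
        (f := fun x => γe x * Real.exp (A t - A x)) (g := fun x => ε * Real.exp (A t - A x))
        ((hγe.mul hGcont).intervalIntegrable _ _)
        ((continuous_const.mul hGcont).intervalIntegrable _ _)]
      apply intervalIntegral.integral_congr
      intro x _
      simp only
      ring
    rw [hadd]
    have hGeq : (∫ x in (0:ℝ)..t, γe x * Real.exp (A t - A x)) = G := by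
      rw [hG]
      apply intervalIntegral.integral_congr
      intro x hx
      rw [uIcc_of_le ht.1] at hx
      simp only
      rw [hγeq x ⟨hx.1, hx.2.trans ht.2⟩, hsplit x hx]
    rw [hGeq, hC]
    ring_nf
    linarith
  -- finish
  have hfinal : Y t ≤ G := by
    refine le_of_forall_pos_le_add ?_
    intro ε' hε'
    have h := hbound (ε' / (C + 1)) (by positivity)
    have hCle : ε' / (C + 1) * C ≤ ε' := by
      rw [div_mul_eq_mul_div, div_le_iff₀ (by linarith)]
      nlinarith
    linarith
  exact hfinal
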